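/- Let n ≥ 1, let Ω ⊂ ℝⁿ be nonempty open and let A ⊂ ℝⁿ. If P_Ω(A) = ∞, then the set {τ ∈ ℝⁿ : P_{Ω,τ}(A) < ∞} is contained in an (n−1)-dimensional linear subspace of ℝⁿ. -/

import Mathlib

open MeasureTheory Metric Filter Set ENNReal
open scoped Topology NNReal ENNReal symmDiff

noncomputable section
attribute [local instance] Classical.propDecidable

abbrev Euc (n : ℕ) := EuclideanSpace ℝ (Fin n)

variable {n : ℕ}

/-- Upper outer density of `A` at `x`. -/
def upperDens (A : Set (Euc n)) (x : Euc n) : ℝ≥0∞ :=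
  limsup (fun r : ℝ => volume (A ∩ closedBall x r) / volume (closedBall x r)) (𝓝[>] 0)

def essInterior (A : Set (Euc n)) : Set (Euc n) := {x | upperDens Aᶜ x = 0}

def essBoundary (A : Set (Euc n)) : Set (Euc n) :=
  {x | 0 < upperDens A x ∧ 0 < upperDens Aᶜ x}

def prepInterior (A : Set (Euc n)) : Set (Euc n) := {x | upperDens Aᶜ x < 1/2}

def prepBoundary (A : Set (Euc n)) : Set (Euc n) :=
  {x | 1/2 ≤ upperDens A x ∧ 1/2 ≤ upperDens Aᶜ x}

def IsTestFun (Ω : Set (Euc n)) (φ : Euc n → ℝ) : Prop :=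
  ContDiff ℝ (⊤ : ℕ∞) φ ∧ HasCompactSupport φ ∧ tsupport φ ⊆ Ω

def IsTestField (Ω : Set (Euc n)) (ψ : Euc n → Euc n) : Prop :=
  ContDiff ℝ (⊤ : ℕ∞) ψ ∧ HasCompactSupport ψ ∧ tsupport ψ ⊆ Ω

/-- divergence of a vector field -/
def divg (ψ : Euc n → Euc n) (x : Euc n) : ℝ :=
  ∑ i, fderiv ℝ ψ x (EuclideanSpace.single i 1) i

/-- Variation of `A` in `Ω` at direction `τ`. -/
def dirVar (Ω A : Set (Euc n)) (τ : Euc n) : ℝ≥0∞ :=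
  if NullMeasurableSet (A ∩ Ω) volume then
    ⨆ (φ : Euc n → ℝ) (_ : IsTestFun Ω φ ∧ ∀ x, |φ x| ≤ 1),
      ENNReal.ofReal (∫ x in Ω, A.indicator (fun _ => (1:ℝ)) x * fderiv ℝ φ x τ)
  else ⊤

/-- Perimeter of `A` in `Ω`. -/
def perim (Ω A : Set (Euc n)) : ℝ≥0∞ :=
  if NullMeasurableSet (A ∩ Ω) volume then
    ⨆ (ψ : Euc n → Euc n) (_ : IsTestField Ω ψ ∧ ∀ x, ‖ψ x‖ ≤ 1),
      ENNReal.ofReal (∫ x in Ω, A.indicator (fun _ => (1:ℝ)) x * divg ψ x)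
  else ⊤

/-- Carathéodory's construction (method II) from a set function `m`
defined on a covering family `F`. -/
def carathII {X : Type*} [EMetricSpace X] (m : Set X → ℝ≥0∞) (F : Set (Set X)) (E : Set X) :
    ℝ≥0∞ :=
  ⨆ (δ : ℝ≥0∞) (_ : 0 < δ),
    ⨅ (t : ℕ → Set X) (_ : E ⊆ ⋃ i, t i) (_ : ∀ i, t i ∈ F ∧ EMetric.diam (t i) ≤ δ),
      ∑' i, m (t i)

/-- orthogonal projection onto the hyperplane orthogonal to `τ` -/
def projFn (τ : Euc n) (x : Euc n) : Euc n := (Submodule.orthogonalProjection (ℝ ∙ τ)ᗮ x : Euc n)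

/-- The projection measure `μ_τ`. -/
def muProj (τ : Euc n) (E : Set (Euc n)) : ℝ≥0∞ :=
  carathII (fun B => μH[(n : ℝ) - 1] (projFn τ '' B)) {B | MeasurableSet B} E

/-- volume of the unit ball in `ℝ^k` -/
def unitBallVol (k : ℕ) : ℝ := Real.pi ^ ((k : ℝ) / 2) / Real.Gamma ((k : ℝ) / 2 + 1)

/-- The integralgeometric measure `I^{n-1}_1`. -/
def intGeom (n : ℕ) (E : Set (Euc n)) : ℝ≥0∞ :=
  carathII (fun B => (ENNReal.ofReal (2 * unitBallVol (n - 1)))⁻¹ *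
      ∫⁻ τ in sphere (0 : Euc n) 1, μH[(n : ℝ) - 1] (projFn τ '' B) ∂μH[(n : ℝ) - 1])
    {B | MeasurableSet B} E

/-- The line through `z` in direction `τ`. -/
def lineThrough (z τ : Euc n) : Set (Euc n) := {y | ∃ t : ℝ, y = z + t • τ}

/-- The set `M^A_{Ω,τ}(z)` of hits of `L_τ(z) ∩ Ω` on `A`. -/
def hits (Ω A : Set (Euc n)) (τ z : Euc n) : Set (Euc n) :=
  {x ∈ lineThrough z τ ∩ Ω | ∀ r > (0:ℝ),
    0 < μH[(1:ℝ)] ((lineThrough z τ ∩ Ω) ∩ A ∩ ball x r) ∧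
    0 < μH[(1:ℝ)] (((lineThrough z τ ∩ Ω) \ A) ∩ ball x r)}

/-- `m^A_{Ω,τ}(z)`, the number of hits. -/
def mHits (Ω A : Set (Euc n)) (τ z : Euc n) : ℝ≥0∞ := (hits Ω A τ z).encard

/-- Integral of a function against a (finite) signed Borel measure. -/
def sintegral (s : SignedMeasure (Euc n)) (φ : Euc n → ℝ) : ℝ :=
  ∫ x, φ x ∂s.toJordanDecomposition.posPart - ∫ x, φ x ∂s.toJordanDecomposition.negPart

/-- A signed measure is concentrated on `Ω` (i.e. it is a measure "on `Ω`"). -/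
def VanishesOff (Ω : Set (Euc n)) (s : SignedMeasure (Euc n)) : Prop :=
  ∀ E, MeasurableSet E → E ⊆ Ωᶜ → s E = 0

/-- `s` is the measure `Φ^g_{Ω,τ}`. -/
def IsDirVarMeasure (Ω : Set (Euc n)) (τ : Euc n) (g : Euc n → ℝ) (s : SignedMeasure (Euc n)) :
    Prop :=
  VanishesOff Ω s ∧
  ∀ φ : Euc n → ℝ, IsTestFun Ω φ →
    ∫ x in Ω, g x * fderiv ℝ φ x τ = - sintegral s φ

/-- `g ∈ BV(Ω,τ)`. -/
def MemBVDir (Ω : Set (Euc n)) (τ : Euc n) (g : Euc n → ℝ) : Prop :=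
  LocallyIntegrableOn g Ω volume ∧ ∃ s, IsDirVarMeasure Ω τ g s

/-- `g ∈ BV(Ω)`. -/
def MemBV (Ω : Set (Euc n)) (g : Euc n → ℝ) : Prop :=
  LocallyIntegrableOn g Ω volume ∧
  ∃ s : Fin n → SignedMeasure (Euc n), (∀ i, VanishesOff Ω (s i)) ∧
    ∀ ψ : Euc n → Euc n, IsTestField Ω ψ →
      ∫ x in Ω, g x * divg ψ x = - ∑ i, sintegral (s i) (fun x => ψ x i)

/-- Total variation `‖Φ‖` of an `ℝⁿ`-valued Borel measure given by components `Φ i`. -/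
def vecTotalVariation (Φ : Fin n → SignedMeasure (Euc n)) : ℝ≥0∞ :=
  ⨆ (P : ℕ → Set (Euc n)) (_ : ∀ i, MeasurableSet (P i))
    (_ : Pairwise (Function.onFun Disjoint P)),
    ∑' i, ENNReal.ofReal (Real.sqrt (∑ j, (Φ j (P i))^2))


/-! ### Auxiliary lemmas -/

lemma ofReal_finset_sum_le {ι : Type*} (s : Finset ι) (f : ι → ℝ) :
    ENNReal.ofReal (∑ i ∈ s, f i) ≤ ∑ i ∈ s, ENNReal.ofReal (f i) := by
  classical
  induction s using Finset.induction_on with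
  | empty => simp
  | insert _ _ h ih =>
    rw [Finset.sum_insert h, Finset.sum_insert h]
    exact (ENNReal.ofReal_add_le).trans (add_le_add_right ih _)

lemma fderivApply_cont_supp (φ : Euc n → ℝ) (hφ : ContDiff ℝ (⊤ : ℕ∞) φ)
    (hc : HasCompactSupport φ) (τ : Euc n) :
    Continuous (fun x => fderiv ℝ φ x τ) ∧ HasCompactSupport (fun x => fderiv ℝ φ x τ) :=
  ⟨(hφ.continuous_fderiv (by simp)).clm_apply continuous_const,
    HasCompactSupport.fderiv_apply (𝕜 := ℝ) hc τ⟩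

lemma indicator_mul_integrable {Ω A : Set (Euc n)} (hΩ : MeasurableSet Ω)
    (hA : NullMeasurableSet (A ∩ Ω) volume)
    {f : Euc n → ℝ} (hf : Continuous f) (hcf : HasCompactSupport f) :
    Integrable (fun x => A.indicator (fun _ => (1:ℝ)) x * f x) (volume.restrict Ω) := by
  obtain ⟨B, hB, hAB⟩ := hA
  have h1 : (fun x => A.indicator (fun _ => (1:ℝ)) x * f x)
      =ᵐ[volume.restrict Ω] (fun x => B.indicator (fun _ => (1:ℝ)) x * f x) := by
    have h2 : ∀ᵐ x ∂(volume.restrict Ω), x ∈ Ω := ae_restrict_mem hΩ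
    have h3 : ∀ᵐ x ∂(volume.restrict Ω), x ∈ (A ∩ Ω) ↔ x ∈ B :=
      ae_restrict_of_ae (eventuallyEq_set.mp hAB)
    filter_upwards [h2, h3] with x hx hx2
    by_cases hxA : x ∈ A
    · rw [indicator_of_mem hxA, indicator_of_mem (hx2.mp ⟨hxA, hx⟩)]
    · rw [indicator_of_notMem hxA, indicator_of_notMem (fun hB => hxA (hx2.mpr hB).1)]
  refine Integrable.mono' ((hf.integrable_of_hasCompactSupport hcf).abs.restrict) ?_ ?_
  · exact (((stronglyMeasurable_const.indicator hB).aestronglyMeasurable.mul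
      hf.aestronglyMeasurable).congr h1.symm)
  · filter_upwards with x
    rw [Real.norm_eq_abs, abs_mul]
    by_cases hxA : x ∈ A
    · simp [indicator_of_mem hxA]
    · simp [indicator_of_notMem hxA, abs_nonneg]

lemma le_dirVar {Ω A : Set (Euc n)} (hA : NullMeasurableSet (A ∩ Ω) volume)
    {φ : Euc n → ℝ} (hφ : IsTestFun Ω φ ∧ ∀ x, |φ x| ≤ 1) (τ : Euc n) :
    ENNReal.ofReal (∫ x in Ω, A.indicator (fun _ => (1:ℝ)) x * fderiv ℝ φ x τ)
      ≤ dirVar Ω A τ := by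
  rw [dirVar, if_pos hA]
  exact le_iSup₂_of_le φ hφ le_rfl

lemma neg_testfun {Ω : Set (Euc n)} {φ : Euc n → ℝ} (hφ : IsTestFun Ω φ ∧ ∀ x, |φ x| ≤ 1) :
    IsTestFun Ω (fun x => -φ x) ∧ ∀ x, |(fun x => -φ x) x| ≤ 1 := by
  refine ⟨⟨hφ.1.1.neg, ?_, ?_⟩, fun x => by simpa using hφ.2 x⟩
  · simpa [HasCompactSupport, tsupport, Function.support_fun_neg] using hφ.1.2.1
  · simpa [tsupport, Function.support_fun_neg] using hφ.1.2.2

lemma abs_le_dirVar {Ω A : Set (Euc n)} (hA : NullMeasurableSet (A ∩ Ω) volume)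
    {φ : Euc n → ℝ} (hφ : IsTestFun Ω φ ∧ ∀ x, |φ x| ≤ 1) (τ : Euc n) :
    ENNReal.ofReal |∫ x in Ω, A.indicator (fun _ => (1:ℝ)) x * fderiv ℝ φ x τ|
      ≤ dirVar Ω A τ := by
  rcases abs_cases (∫ x in Ω, A.indicator (fun _ => (1:ℝ)) x * fderiv ℝ φ x τ) with ⟨he, _⟩ | ⟨he, _⟩
  · rw [he]; exact le_dirVar hA hφ τ
  · rw [he]
    have hneg := le_dirVar hA (neg_testfun hφ) τ
    have : (∫ x in Ω, A.indicator (fun _ => (1:ℝ)) x * fderiv ℝ (fun x => -φ x) x τ)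
        = -∫ x in Ω, A.indicator (fun _ => (1:ℝ)) x * fderiv ℝ φ x τ := by
      rw [← integral_neg]
      refine integral_congr_ae (Filter.Eventually.of_forall fun x => ?_)
      simp only [fderiv_fun_neg, ContinuousLinearMap.neg_apply, mul_neg]
    rw [this] at hneg
    exact hneg

lemma dirVar_zero_le {Ω A : Set (Euc n)} (hA : NullMeasurableSet (A ∩ Ω) volume) :
    dirVar Ω A (0 : Euc n) ≤ 0 := by
  rw [dirVar, if_pos hA]
  refine iSup₂_le fun φ hφ => ?_
  have : (∫ x in Ω, A.indicator (fun _ => (1:ℝ)) x * fderiv ℝ φ x (0 : Euc n)) = 0 := by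
    simp
  rw [this]
  simp

lemma dirVar_add_le {Ω A : Set (Euc n)} (hΩ : MeasurableSet Ω)
    (hA : NullMeasurableSet (A ∩ Ω) volume) (τ₁ τ₂ : Euc n) :
    dirVar Ω A (τ₁ + τ₂) ≤ dirVar Ω A τ₁ + dirVar Ω A τ₂ := by
  conv_lhs => rw [dirVar, if_pos hA]
  refine iSup₂_le fun φ hφ => ?_
  obtain ⟨hc1, hs1⟩ := fderivApply_cont_supp φ hφ.1.1 hφ.1.2.1 τ₁
  obtain ⟨hc2, hs2⟩ := fderivApply_cont_supp φ hφ.1.1 hφ.1.2.1 τ₂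
  have key : (∫ x in Ω, A.indicator (fun _ => (1:ℝ)) x * fderiv ℝ φ x (τ₁ + τ₂))
      = (∫ x in Ω, A.indicator (fun _ => (1:ℝ)) x * fderiv ℝ φ x τ₁)
        + ∫ x in Ω, A.indicator (fun _ => (1:ℝ)) x * fderiv ℝ φ x τ₂ := by
    rw [← integral_add (indicator_mul_integrable hΩ hA hc1 hs1)
      (indicator_mul_integrable hΩ hA hc2 hs2)]
    refine integral_congr_ae (Filter.Eventually.of_forall fun x => ?_)
    simp only [map_add, mul_add]
  rw [key]
  exact (ENNReal.ofReal_add_le).trans (add_le_add (le_dirVar hA hφ τ₁) (le_dirVar hA hφ τ₂))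

lemma dirVar_smul_le {Ω A : Set (Euc n)} (hA : NullMeasurableSet (A ∩ Ω) volume)
    (c : ℝ) (τ : Euc n) :
    dirVar Ω A (c • τ) ≤ ENNReal.ofReal |c| * dirVar Ω A τ := by
  conv_lhs => rw [dirVar, if_pos hA]
  refine iSup₂_le fun φ hφ => ?_
  have key : (∫ x in Ω, A.indicator (fun _ => (1:ℝ)) x * fderiv ℝ φ x (c • τ))
      = c * ∫ x in Ω, A.indicator (fun _ => (1:ℝ)) x * fderiv ℝ φ x τ := by
    rw [← integral_const_mul]
    refine integral_congr_ae (Filter.Eventually.of_forall fun x => ?_)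
    simp only [_root_.map_smul, smul_eq_mul]
    ring
  rw [key]
  calc ENNReal.ofReal (c * ∫ x in Ω, A.indicator (fun _ => (1:ℝ)) x * fderiv ℝ φ x τ)
      ≤ ENNReal.ofReal (|c| * |∫ x in Ω, A.indicator (fun _ => (1:ℝ)) x * fderiv ℝ φ x τ|) :=
        ENNReal.ofReal_le_ofReal ((le_abs_self _).trans (le_of_eq (abs_mul _ _)))
    _ = ENNReal.ofReal |c| * ENNReal.ofReal |∫ x in Ω, A.indicator (fun _ => (1:ℝ)) x *
          fderiv ℝ φ x τ| := ENNReal.ofReal_mul (abs_nonneg c)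
    _ ≤ ENNReal.ofReal |c| * dirVar Ω A τ := mul_le_mul_right (abs_le_dirVar hA hφ τ) _

lemma component_testfun {Ω : Set (Euc n)} {ψ : Euc n → Euc n}
    (hψ : IsTestField Ω ψ ∧ ∀ x, ‖ψ x‖ ≤ 1) (i : Fin n) :
    IsTestFun Ω (fun x => ψ x i) ∧ ∀ x, |ψ x i| ≤ 1 := by
  constructor
  · refine ⟨(EuclideanSpace.proj (𝕜 := ℝ) i).contDiff.comp hψ.1.1, ?_, ?_⟩
    · exact hψ.1.2.1.comp_left (g := fun y : Euc n => y i) rfl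
    · refine (closure_mono ?_).trans hψ.1.2.2
      intro x hx
      simp only [Function.mem_support] at hx ⊢
      intro hc; rw [hc] at hx; simp at hx
  · intro x
    calc |ψ x i| = |(inner ℝ (EuclideanSpace.single i (1:ℝ)) (ψ x) : ℝ)| := by
          rw [EuclideanSpace.inner_single_left]; simp
      _ ≤ ‖EuclideanSpace.single i (1:ℝ)‖ * ‖ψ x‖ := abs_real_inner_le_norm _ _
      _ ≤ 1 := by rw [EuclideanSpace.norm_single]; simpa using hψ.2 x

lemma component_fderiv {ψ : Euc n → Euc n} (hψ : ContDiff ℝ (⊤ : ℕ∞) ψ)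
    (i : Fin n) (x v : Euc n) :
    fderiv ℝ (fun x => ψ x i) x v = fderiv ℝ ψ x v i := by
  have h1 : (fun x => ψ x i) = (EuclideanSpace.proj (𝕜 := ℝ) i) ∘ ψ := rfl
  rw [h1, fderiv_comp x (EuclideanSpace.proj (𝕜 := ℝ) i).differentiableAt
    ((hψ.differentiable (by simp)) x), (EuclideanSpace.proj (𝕜 := ℝ) i).fderiv]
  rfl

lemma perim_le_sum_dirVar {Ω A : Set (Euc n)} (hΩ : MeasurableSet Ω)
    (hA : NullMeasurableSet (A ∩ Ω) volume) :
    perim Ω A ≤ ∑ i : Fin n, dirVar Ω A (EuclideanSpace.single i 1) := by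
  rw [perim, if_pos hA]
  refine iSup₂_le fun ψ hψ => ?_
  have htest := fun i => component_testfun hψ i
  have key : (∫ x in Ω, A.indicator (fun _ => (1:ℝ)) x * divg ψ x)
      = ∑ i : Fin n, ∫ x in Ω, A.indicator (fun _ => (1:ℝ)) x *
          fderiv ℝ (fun x => ψ x i) x (EuclideanSpace.single i 1) := by
    rw [← integral_finset_sum _ (fun i _ => indicator_mul_integrable hΩ hA
      (fderivApply_cont_supp _ (htest i).1.1 (htest i).1.2.1 _).1
      (fderivApply_cont_supp _ (htest i).1.1 (htest i).1.2.1 _).2)]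
    refine integral_congr_ae (Filter.Eventually.of_forall fun x => ?_)
    simp only [divg, Finset.mul_sum]
    refine Finset.sum_congr rfl fun i _ => ?_
    rw [component_fderiv hψ.1.1 i]
  rw [key]
  refine (ofReal_finset_sum_le _ _).trans (Finset.sum_le_sum fun i _ => ?_)
  exact le_dirVar hA (htest i) _

lemma exists_hyperplane_above {W₀ : Submodule ℝ (Euc n)} (hn : 1 ≤ n) (hW₀ : W₀ ≠ ⊤) :
    ∃ W : Submodule ℝ (Euc n), Module.finrank ℝ W = n - 1 ∧ W₀ ≤ W := by
  obtain ⟨f, hf0, hle⟩ := W₀.exists_le_ker_of_lt_top (lt_top_iff_ne_top.mpr hW₀)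
  refine ⟨LinearMap.ker f, ?_, hle⟩
  have hrank : Module.finrank ℝ (LinearMap.range f) = 1 := by
    have h1 : LinearMap.range f ≠ ⊥ := by
      intro hbot
      exact hf0 (LinearMap.range_eq_bot.mp hbot)
    have h2 : Module.finrank ℝ (LinearMap.range f) ≤ 1 :=
      (Submodule.finrank_le _).trans (by simp [Module.finrank_self])
    have h3 : Module.finrank ℝ (LinearMap.range f) ≠ 0 :=
      fun h0 => h1 (Submodule.finrank_eq_zero.mp h0)
    omega
  have := LinearMap.finrank_range_add_finrank_ker f
  rw [hrank] at this
  have hdim : Module.finrank ℝ (Euc n) = n := by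
    simp [finrank_euclideanSpace]
  omega

/-- If `P_Ω(A) = ∞` then the set of directions `τ` with
`P_{Ω,τ}(A) < ∞` lies in an `(n-1)`-dimensional linear subspace. -/
theorem finite_dirVar_directions_subset_hyperplane
    {n : ℕ} (hn : 1 ≤ n) (Ω : Set (Euc n)) (hΩ : IsOpen Ω) (hne : Ω.Nonempty)
    (A : Set (Euc n)) (h : perim Ω A = ⊤) :
    ∃ W : Submodule ℝ (Euc n), Module.finrank ℝ W = n - 1 ∧
      {τ : Euc n | dirVar Ω A τ < ⊤} ⊆ (W : Set (Euc n)) := by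
  by_cases hA : NullMeasurableSet (A ∩ Ω) volume
  · -- the set of good directions is a submodule
    set W₀ : Submodule ℝ (Euc n) :=
      { carrier := {τ : Euc n | dirVar Ω A τ < ⊤}
        zero_mem' := lt_of_le_of_lt (dirVar_zero_le hA) (by simp)
        add_mem' := fun {τ₁ τ₂} h1 h2 =>
          lt_of_le_of_lt (dirVar_add_le hΩ.measurableSet hA τ₁ τ₂)
            (ENNReal.add_lt_top.mpr ⟨h1, h2⟩)
        smul_mem' := fun c τ hτ =>
          lt_of_le_of_lt (dirVar_smul_le hA c τ)
            (ENNReal.mul_lt_top ENNReal.ofReal_lt_top hτ) } with hW₀def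
    have hW₀ : W₀ ≠ ⊤ := by
      intro htop
      have hall : ∀ i : Fin n, dirVar Ω A (EuclideanSpace.single i 1) < ⊤ := fun i => by
        have : (EuclideanSpace.single i (1:ℝ)) ∈ W₀ := htop ▸ Submodule.mem_top
        exact this
      have hsum : ∑ i : Fin n, dirVar Ω A (EuclideanSpace.single i 1) < ⊤ :=
        ENNReal.sum_lt_top.mpr (fun i _ => hall i)
      exact absurd h (ne_of_lt (lt_of_le_of_lt (perim_le_sum_dirVar hΩ.measurableSet hA) hsum))
    obtain ⟨W, hWrank, hWle⟩ := exists_hyperplane_above hn hW₀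
    exact ⟨W, hWrank, fun τ hτ => hWle hτ⟩
  · -- dirVar is always ⊤, the set is empty
    haveI : Nonempty (Fin n) := ⟨⟨0, hn⟩⟩
    have hbot : (⊥ : Submodule ℝ (Euc n)) ≠ ⊤ := bot_ne_top
    obtain ⟨W, hWrank, _⟩ := exists_hyperplane_above hn hbot
    refine ⟨W, hWrank, fun τ hτ => ?_⟩
    exfalso
    have hd : dirVar Ω A τ = ⊤ := by rw [dirVar, if_neg hA]
    rw [Set.mem_setOf_eq, hd] at hτ
    exact lt_irrefl _ hτ

end
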